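/- Let D ≥ 1, let K and L be constant skew-symmetric real D×D matrices, let S : ℝ^D → ℝ be continuously differentiable, and let z : ℝ × ℝ → ℝ^D, written z(t,x), be twice continuously differentiable and satisfy the multisymplectic PDE K ∂_t z + L ∂_x z = ∇S(z) at every point. Define the energy density E(t,x) := ½ z·(L ∂_x z) − S(z) and the energy flux F(t,x) := ½ (∂_t z)·(L z). Then ∂_t E + ∂_x F = 0 at every point (t,x) ∈ ℝ². -/

import Mathlib

open Matrix

/-- Gradient of `S : ℝ^D → ℝ`, componentwise via the Fréchet derivative. -/
noncomputable def grad {D : ℕ} (S : (Fin D → ℝ) → ℝ) (p : Fin D → ℝ) : Fin D → ℝ :=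
  fun i => fderiv ℝ S p (Pi.single i 1)

/-- Partial derivative in the first (time) variable. -/
noncomputable def pt {E : Type*} [NormedAddCommGroup E] [NormedSpace ℝ E]
    (z : ℝ × ℝ → E) (p : ℝ × ℝ) : E :=
  deriv (fun s => z (s, p.2)) p.1

/-- Partial derivative in the second (space) variable. -/
noncomputable def px {E : Type*} [NormedAddCommGroup E] [NormedSpace ℝ E]
    (z : ℝ × ℝ → E) (p : ℝ × ℝ) : E :=
  deriv (fun y => z (p.1, y)) p.2

/-- A continuous linear functional on `ℝ^D` is the dot product with its gradient vector. -/
lemma clm_apply_eq_dot {D : ℕ} (φ : (Fin D → ℝ) →L[ℝ] ℝ) (v : Fin D → ℝ) :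
    φ v = (fun i => φ (Pi.single i 1)) ⬝ᵥ v := by
  have hv : v = ∑ i, (v i) • (Pi.single i 1 : Fin D → ℝ) := by
    funext j
    simp [Finset.sum_apply, Pi.single_apply, Finset.sum_ite_eq']
  conv_lhs => rw [hv]
  rw [map_sum]
  simp [dotProduct, mul_comm]

lemma skew_dot {D : ℕ} {M : Matrix (Fin D) (Fin D) ℝ} (hM : Mᵀ = -M)
    (u v : Fin D → ℝ) : u ⬝ᵥ M.mulVec v = -(v ⬝ᵥ M.mulVec u) := by
  rw [dotProduct_mulVec, ← Matrix.mulVec_transpose, hM, Matrix.neg_mulVec,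
    neg_dotProduct, dotProduct_comm]

lemma skew_self {D : ℕ} {M : Matrix (Fin D) (Fin D) ℝ} (hM : Mᵀ = -M)
    (u : Fin D → ℝ) : u ⬝ᵥ M.mulVec u = 0 := by
  have := skew_dot hM u u; linarith

/-- Product rule for `s ↦ f s ⬝ᵥ M.mulVec (g s)`. -/
lemma hasDerivAt_dot_mulVec {D : ℕ} (M : Matrix (Fin D) (Fin D) ℝ)
    {f g : ℝ → Fin D → ℝ} {f' g' : Fin D → ℝ} {t : ℝ}
    (hf : HasDerivAt f f' t) (hg : HasDerivAt g g' t) :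
    HasDerivAt (fun s => f s ⬝ᵥ M.mulVec (g s))
      (f' ⬝ᵥ M.mulVec (g t) + f t ⬝ᵥ M.mulVec g') t := by
  have hfi := hasDerivAt_pi.1 hf
  have hgi := hasDerivAt_pi.1 hg
  have key : HasDerivAt (fun s => ∑ i, f s i * ∑ j, M i j * g s j)
      (∑ i, (f' i * ∑ j, M i j * g t j + f t i * ∑ j, M i j * g' j)) t := by
    apply HasDerivAt.fun_sum
    intro i _
    exact (hfi i).mul (HasDerivAt.fun_sum fun j _ => (hgi j).const_mul (M i j))
  convert key using 1
  · simp [dotProduct, Matrix.mulVec, Finset.sum_add_distrib]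
  · simp [dotProduct, Matrix.mulVec, Finset.sum_add_distrib]

/-- Energy conservation law for multisymplectic PDEs:
`∂_t E + ∂_x F = 0` where `E = ½ z·(L ∂_x z) − S(z)` and `F = ½ (∂_t z)·(L z)`. -/
theorem energy_conservation_law
    (D : ℕ) (hD : 1 ≤ D)
    (K L : Matrix (Fin D) (Fin D) ℝ)
    (hK : Kᵀ = -K) (hL : Lᵀ = -L)
    (S : (Fin D → ℝ) → ℝ) (hS : ContDiff ℝ 1 S)
    (z : ℝ × ℝ → Fin D → ℝ) (hz : ContDiff ℝ 2 z)
    (hpde : ∀ p : ℝ × ℝ, K.mulVec (pt z p) + L.mulVec (px z p) = grad S (z p)) :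
    ∀ p : ℝ × ℝ,
      pt (fun q => (1 / 2 : ℝ) * (z q ⬝ᵥ L.mulVec (px z q)) - S (z q)) p
        + px (fun q => (1 / 2 : ℝ) * (pt z q ⬝ᵥ L.mulVec (z q))) p = 0 := by
  intro p
  have hzd : Differentiable ℝ z := hz.differentiable (by norm_num)
  set a : ℝ × ℝ → Fin D → ℝ := fun q => fderiv ℝ z q (1, 0) with ha_def
  set b : ℝ × ℝ → Fin D → ℝ := fun q => fderiv ℝ z q (0, 1) with hb_def
  have lineT : ∀ q : ℝ × ℝ, HasDerivAt (fun s : ℝ => ((s, q.2) : ℝ × ℝ)) (1, 0) q.1 :=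
    fun q => HasDerivAt.prodMk (hasDerivAt_id q.1) (hasDerivAt_const q.1 q.2)
  have lineX : ∀ q : ℝ × ℝ, HasDerivAt (fun y : ℝ => ((q.1, y) : ℝ × ℝ)) (0, 1) q.2 :=
    fun q => HasDerivAt.prodMk (hasDerivAt_const q.2 q.1) (hasDerivAt_id q.2)
  have hzT : ∀ q : ℝ × ℝ, HasDerivAt (fun s => z (s, q.2)) (a q) q.1 := fun q =>
    (hzd q).hasFDerivAt.comp_hasDerivAt q.1 (lineT q)
  have hzX : ∀ q : ℝ × ℝ, HasDerivAt (fun y => z (q.1, y)) (b q) q.2 := fun q =>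
    (hzd q).hasFDerivAt.comp_hasDerivAt q.2 (lineX q)
  have hpt : ∀ q, pt z q = a q := fun q => (hzT q).deriv
  have hpx : ∀ q, px z q = b q := fun q => (hzX q).deriv
  -- fderiv z is C¹, hence differentiable
  have hDz : ContDiff ℝ 1 (fderiv ℝ z) := hz.fderiv_right (by norm_num)
  have hDzd : Differentiable ℝ (fderiv ℝ z) := hDz.differentiable one_ne_zero
  have heval : ∀ v : ℝ × ℝ, Differentiable ℝ (fun q => fderiv ℝ z q v) :=
    fun v => hDzd.clm_apply (differentiable_const v)
  have hfd_eval : ∀ (v u q : ℝ × ℝ),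
      fderiv ℝ (fun q => fderiv ℝ z q v) q u = fderiv ℝ (fderiv ℝ z) q u v := by
    intro v u q
    rw [fderiv_clm_apply (hDzd q) (differentiableAt_const v)]
    simp
  -- second derivative symmetry
  have hsym : fderiv ℝ (fderiv ℝ z) p (1, 0) (0, 1) = fderiv ℝ (fderiv ℝ z) p (0, 1) (1, 0) :=
    second_derivative_symmetric (fun y => (hzd y).hasFDerivAt) ((hDzd p).hasFDerivAt) _ _
  set c : Fin D → ℝ := fderiv ℝ (fderiv ℝ z) p (1, 0) (0, 1) with hc_def
  -- t-derivative of b along the horizontal line through p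
  have hbT : HasDerivAt (fun s => b (s, p.2)) c p.1 := by
    have := ((heval (0,1) p).hasFDerivAt).comp_hasDerivAt p.1 (lineT p)
    rwa [hfd_eval (0,1) (1,0) p] at this
  -- x-derivative of a along the vertical line through p
  have haX : HasDerivAt (fun y => a (p.1, y)) c p.2 := by
    have := ((heval (1,0) p).hasFDerivAt).comp_hasDerivAt p.2 (lineX p)
    rw [hfd_eval (1,0) (0,1) p] at this
    rwa [← hsym] at this
  -- chain rule for S ∘ z along the horizontal line
  have hST : HasDerivAt (fun s => S (z (s, p.2))) (grad S (z p) ⬝ᵥ a p) p.1 := by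
    have := ((hS.differentiable one_ne_zero (z p)).hasFDerivAt).comp_hasDerivAt p.1 (hzT p)
    rwa [clm_apply_eq_dot (fderiv ℝ S (z p)) (a p)] at this
  -- compute pt of the energy density
  have hE : HasDerivAt (fun s => (1 / 2 : ℝ) * (z (s, p.2) ⬝ᵥ L.mulVec (b (s, p.2)))
        - S (z (s, p.2)))
      ((1 / 2 : ℝ) * (a p ⬝ᵥ L.mulVec (b p) + z p ⬝ᵥ L.mulVec c)
        - grad S (z p) ⬝ᵥ a p) p.1 :=
    ((hasDerivAt_dot_mulVec L (hzT p) hbT).const_mul _).sub hST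
  -- compute px of the energy flux
  have hF : HasDerivAt (fun y => (1 / 2 : ℝ) * (a (p.1, y) ⬝ᵥ L.mulVec (z (p.1, y))))
      ((1 / 2 : ℝ) * (c ⬝ᵥ L.mulVec (z p) + a p ⬝ᵥ L.mulVec (b p))) p.2 :=
    (hasDerivAt_dot_mulVec L haX (hzX p)).const_mul _
  -- rewrite pt/px of the statement into derivs of these line functions
  have e1 : pt (fun q => (1 / 2 : ℝ) * (z q ⬝ᵥ L.mulVec (px z q)) - S (z q)) p
      = (1 / 2 : ℝ) * (a p ⬝ᵥ L.mulVec (b p) + z p ⬝ᵥ L.mulVec c) - grad S (z p) ⬝ᵥ a p := by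
    have : (fun s => (1 / 2 : ℝ) * (z (s, p.2) ⬝ᵥ L.mulVec (px z (s, p.2))) - S (z (s, p.2)))
        = fun s => (1 / 2 : ℝ) * (z (s, p.2) ⬝ᵥ L.mulVec (b (s, p.2))) - S (z (s, p.2)) := by
      funext s; rw [hpx]
    rw [pt, this]
    exact hE.deriv
  have e2 : px (fun q => (1 / 2 : ℝ) * (pt z q ⬝ᵥ L.mulVec (z q))) p
      = (1 / 2 : ℝ) * (c ⬝ᵥ L.mulVec (z p) + a p ⬝ᵥ L.mulVec (b p)) := by
    have : (fun y => (1 / 2 : ℝ) * (pt z (p.1, y) ⬝ᵥ L.mulVec (z (p.1, y))))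
        = fun y => (1 / 2 : ℝ) * (a (p.1, y) ⬝ᵥ L.mulVec (z (p.1, y))) := by
      funext y; rw [hpt]
    rw [px, this]
    exact hF.deriv
  rw [e1, e2]
  -- algebraic conclusion
  have hzc : z p ⬝ᵥ L.mulVec c = -(c ⬝ᵥ L.mulVec (z p)) := skew_dot hL _ _
  have hgrad : grad S (z p) ⬝ᵥ a p = a p ⬝ᵥ L.mulVec (b p) := by
    rw [← hpde p, hpt, hpx, add_dotProduct, dotProduct_comm (K.mulVec (a p)),
      skew_self hK, dotProduct_comm (L.mulVec (b p))]
    ring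
  rw [hzc, hgrad]
  ring
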